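/- Let (H,X) be a conjunctive query and G₁, G₂ graphs. If |Hom(F_ℓ(H,X), G₁)| = |Hom(F_ℓ(H,X), G₂)| for all positive integers ℓ, then |Ans((H,X), G₁)| = |Ans((H,X), G₂)|. -/

import Mathlib

/-- The canonical map `γ` from the vertices of the `ℓ`-copy `F_ℓ(H,X)` to the
vertices of `H`: each `x ∈ X` goes to itself, and each clone `(y,i)` goes to `y`. -/
def gammaMap {V : Type*} (X : Set V) (ℓ : ℕ) :
    (↥X ⊕ (↥(Xᶜ) × Fin ℓ)) → V
  | Sum.inl x => ↑x
  | Sum.inr (y, _) => ↑y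

/-- The copy index of a vertex of `F_ℓ(H,X)` (if any). -/
def copyIdx {V : Type*} (X : Set V) (ℓ : ℕ) :
    (↥X ⊕ (↥(Xᶜ) × Fin ℓ)) → Option (Fin ℓ)
  | Sum.inl _ => none
  | Sum.inr (_, i) => some i

/-- The `ℓ`-copy `F_ℓ(H,X)`: vertex set `X ∪ ((V(H)∖X) × [ℓ])`; two vertices are
adjacent iff their `γ`-images are adjacent in `H` and, when both lie in the cloned
part, their copy indices coincide.  (Edges within `X`, edges `{u,(v,i)}` for all
indices `i`, and edges `{(u,i),(v,i)}` within each copy.) -/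
def copyGraph {V : Type*} (H : SimpleGraph V) (X : Set V) (ℓ : ℕ) :
    SimpleGraph (↥X ⊕ (↥(Xᶜ) × Fin ℓ)) where
  Adj a b := H.Adj (gammaMap X ℓ a) (gammaMap X ℓ b) ∧
    ∀ i j, copyIdx X ℓ a = some i → copyIdx X ℓ b = some j → i = j
  symm := by
    constructor
    intro a b h
    exact ⟨h.1.symm, fun i j hi hj => (h.2 j i hj hi).symm⟩
  loopless := by
    constructor
    intro a h
    exact H.ne_of_adj h.1 rfl

/-- The set of answers of the conjunctive query `(H,X)` in a graph `G`: maps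
`a : X → V(G)` that extend to a graph homomorphism from `H` to `G`. -/
def Answers {V W : Type*} (H : SimpleGraph V) (X : Set V) (G : SimpleGraph W) :
    Set (↥X → W) :=
  {a | ∃ h : H →g G, ∀ x : ↥X, h ↑x = a x}

section Aux

variable {V W : Type*} (H : SimpleGraph V) (X : Set V) (G : SimpleGraph W)

open Classical in
noncomputable def combineMap (a : ↥X → W) (b : ↥(Xᶜ) → W) (v : V) : W :=
  if h : v ∈ X then a ⟨v, h⟩ else b ⟨v, h⟩

lemma combineMap_mem {a : ↥X → W} {b : ↥(Xᶜ) → W} {v : V} (h : v ∈ X) :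
    combineMap X a b v = a ⟨v, h⟩ := dif_pos h

lemma combineMap_not_mem {a : ↥X → W} {b : ↥(Xᶜ) → W} {v : V} (h : v ∉ X) :
    combineMap X a b v = b ⟨v, h⟩ := dif_neg h

def IsExt (a : ↥X → W) (b : ↥(Xᶜ) → W) : Prop :=
  ∀ u v : V, H.Adj u v → G.Adj (combineMap X a b u) (combineMap X a b v)

noncomputable def homEquiv (ℓ : ℕ) (hℓ : 0 < ℓ) :
    (copyGraph H X ℓ →g G) ≃
      (Σ a : ↥X → W, Fin ℓ → {b : ↥(Xᶜ) → W // IsExt H X G a b}) where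
  toFun h := ⟨fun x => h (Sum.inl x), fun i =>
    ⟨fun y => h (Sum.inr (y, i)), by
      intro u v huv
      by_cases hu : u ∈ X <;> by_cases hv : v ∈ X
      · rw [combineMap_mem X hu, combineMap_mem X hv]
        exact h.map_adj (⟨huv, by intro i j hi; simp [copyIdx] at hi⟩ :
          (copyGraph H X ℓ).Adj (Sum.inl ⟨u, hu⟩) (Sum.inl ⟨v, hv⟩))
      · rw [combineMap_mem X hu, combineMap_not_mem X hv]
        exact h.map_adj (⟨huv, by intro i j hi; simp [copyIdx] at hi⟩ :
          (copyGraph H X ℓ).Adj (Sum.inl ⟨u, hu⟩) (Sum.inr (⟨v, hv⟩, i)))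
      · rw [combineMap_not_mem X hu, combineMap_mem X hv]
        exact h.map_adj (⟨huv, by intro i j _ hj; simp [copyIdx] at hj⟩ :
          (copyGraph H X ℓ).Adj (Sum.inr (⟨u, hu⟩, i)) (Sum.inl ⟨v, hv⟩))
      · rw [combineMap_not_mem X hu, combineMap_not_mem X hv]
        exact h.map_adj (⟨huv, by intro i' j' hi hj; simp [copyIdx] at hi hj; omega⟩ :
          (copyGraph H X ℓ).Adj (Sum.inr (⟨u, hu⟩, i)) (Sum.inr (⟨v, hv⟩, i)))⟩⟩
  invFun p :=
    { toFun := fun z => match z with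
        | Sum.inl x => p.1 x
        | Sum.inr (y, i) => (p.2 i).1 y
      map_rel' := by
        rintro (x | ⟨x, i⟩) (y | ⟨y, j⟩) ⟨hadj, hidx⟩
        · have := (p.2 ⟨0, hℓ⟩).2 ↑x ↑y hadj
          rwa [combineMap_mem X x.2, combineMap_mem X y.2, Subtype.coe_eta,
            Subtype.coe_eta] at this
        · have := (p.2 j).2 ↑x ↑y hadj
          rwa [combineMap_mem X x.2, combineMap_not_mem X y.2, Subtype.coe_eta,
            Subtype.coe_eta] at this
        · have := (p.2 i).2 ↑x ↑y hadj
          rwa [combineMap_not_mem X x.2, combineMap_mem X y.2, Subtype.coe_eta,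
            Subtype.coe_eta] at this
        · have hij : i = j := hidx i j rfl rfl
          subst hij
          have := (p.2 i).2 ↑x ↑y hadj
          rwa [combineMap_not_mem X x.2, combineMap_not_mem X y.2, Subtype.coe_eta,
            Subtype.coe_eta] at this }
  left_inv h := by
    ext z
    rcases z with x | ⟨y, i⟩ <;> rfl
  right_inv p := by
    rcases p with ⟨a, bs⟩
    simp only [Sigma.mk.inj_iff, heq_eq_eq]
    exact ⟨rfl, rfl⟩

lemma mem_answers_iff (a : ↥X → W) :
    a ∈ Answers H X G ↔ Nonempty {b : ↥(Xᶜ) → W // IsExt H X G a b} := by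
  constructor
  · rintro ⟨h, hh⟩
    refine ⟨⟨fun y => h ↑y, ?_⟩⟩
    intro u v huv
    have key : ∀ u : V, combineMap X a (fun y => h ↑y) u = h u := by
      intro u
      by_cases hu : u ∈ X
      · rw [combineMap_mem X hu, ← hh ⟨u, hu⟩]
      · rw [combineMap_not_mem X hu]
    rw [key u, key v]
    exact h.map_adj huv
  · rintro ⟨b, hb⟩
    exact ⟨⟨combineMap X a b, fun huv => hb _ _ huv⟩,
      fun x => by simpa using combineMap_mem X (b := b) x.2⟩

end Aux

section Counting

open Finset

variable {V W : Type*} (H : SimpleGraph V) (X : Set V) (G : SimpleGraph W)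

lemma card_hom_eq [Fintype V] [DecidableEq V] [Fintype W] [DecidablePred (· ∈ X)] (ℓ : ℕ) (hℓ : 0 < ℓ) :
    Nat.card (copyGraph H X ℓ →g G)
      = ∑ a : ↥X → W, Nat.card {b : ↥(Xᶜ) → W // IsExt H X G a b} ^ ℓ := by
  classical
  rw [Nat.card_congr (homEquiv H X G ℓ hℓ), Nat.card_eq_fintype_card, Fintype.card_sigma]
  refine Finset.sum_congr rfl fun a _ => ?_
  rw [Fintype.card_fun, Fintype.card_fin, Nat.card_eq_fintype_card]

lemma sum_pow_group {α : Type*} [Fintype α] (E : α → ℕ) (B : ℕ) (hle : ∀ a, E a ≤ B)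
    (ℓ : ℕ) (hℓ : 0 < ℓ) :
    ∑ a, E a ^ ℓ
      = ∑ k ∈ Finset.Icc 1 B, (Finset.univ.filter fun a => E a = k).card * k ^ ℓ := by
  classical
  have hmaps : ∀ a ∈ Finset.univ, E a ∈ Finset.range (B + 1) :=
    fun a _ => Finset.mem_range.2 (Nat.lt_succ_of_le (hle a))
  rw [← Finset.sum_fiberwise_of_maps_to hmaps (fun a => E a ^ ℓ)]
  have hsplit : Finset.range (B + 1) = insert 0 (Finset.Icc 1 B) := by
    ext k; simp [Nat.lt_succ_iff]; omega
  rw [hsplit, Finset.sum_insert (by simp)]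
  have h0 : ∑ a ∈ Finset.univ.filter (fun a => E a = 0), E a ^ ℓ = 0 := by
    refine Finset.sum_eq_zero fun a ha => ?_
    rw [(Finset.mem_filter.1 ha).2]
    exact zero_pow hℓ.ne'
  rw [h0, zero_add]
  refine Finset.sum_congr rfl fun k _ => ?_
  rw [Finset.sum_congr rfl (fun a ha => by rw [(Finset.mem_filter.1 ha).2]),
    Finset.sum_const, smul_eq_mul]

lemma count_group {α : Type*} [Fintype α] (E : α → ℕ) (B : ℕ) (hle : ∀ a, E a ≤ B) :
    (Finset.univ.filter fun a => E a ≠ 0).card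
      = ∑ k ∈ Finset.Icc 1 B, (Finset.univ.filter fun a => E a = k).card := by
  classical
  rw [Finset.card_eq_sum_card_fiberwise (f := E) (t := Finset.Icc 1 B)
    (fun a ha => Finset.mem_Icc.2
      ⟨Nat.one_le_iff_ne_zero.2 (Finset.mem_filter.1 ha).2, hle a⟩)]
  refine Finset.sum_congr rfl fun k hk => ?_
  have hk1 : 1 ≤ k := (Finset.mem_Icc.1 hk).1
  congr 1
  rw [Finset.filter_filter]
  apply Finset.filter_congr
  intro a _
  constructor
  · rintro ⟨_, h⟩; exact h
  · intro h; exact ⟨by omega, h⟩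

lemma card_answers [Fintype V] [DecidableEq V] [Fintype W] [DecidablePred (· ∈ X)] :
    Nat.card ↥(Answers H X G)
      = (Finset.univ.filter fun a : ↥X → W =>
          Nat.card {b : ↥(Xᶜ) → W // IsExt H X G a b} ≠ 0).card := by
  classical
  have key : ∀ a : ↥X → W,
      a ∈ Answers H X G ↔ Nat.card {b : ↥(Xᶜ) → W // IsExt H X G a b} ≠ 0 := by
    intro a
    rw [mem_answers_iff]
    constructor
    · intro h; exact Nat.card_ne_zero.2 ⟨h, inferInstance⟩
    · intro h; exact (Nat.card_ne_zero.1 h).1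
  rw [Nat.card_eq_fintype_card, Fintype.card_subtype]
  congr 1
  exact Finset.filter_congr fun a _ => by simpa using key a

lemma vandermonde_zero {B : ℕ} (c : Fin B → ℚ)
    (h : ∀ j : Fin B, ∑ i : Fin B, c i * ((i : ℚ) + 1) ^ ((j : ℕ) + 1) = 0) :
    ∀ i, c i = 0 := by
  set v : Fin B → ℚ := fun i => (i : ℚ) + 1 with hv
  have hinj : Function.Injective v := by
    intro i j hij
    have : ((i : ℕ) : ℚ) = ((j : ℕ) : ℚ) := by
      simpa [hv] using hij
    exact Fin.ext (Nat.cast_injective this)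
  set M : Matrix (Fin B) (Fin B) ℚ := (Matrix.vandermonde v).transpose with hM
  have hdet : IsUnit M.det := by
    rw [hM, Matrix.det_transpose]
    exact isUnit_iff_ne_zero.2 (Matrix.det_vandermonde_ne_zero_iff.2 hinj)
  have hMinj : Function.Injective M.mulVec :=
    Matrix.mulVec_injective_iff_isUnit.2 ((Matrix.isUnit_iff_isUnit_det M).2 hdet)
  set d : Fin B → ℚ := fun i => c i * v i with hd
  have hzero : M.mulVec d = 0 := by
    funext j
    simp only [Matrix.mulVec, dotProduct, hM, Matrix.transpose_apply,
      Matrix.vandermonde, Pi.zero_apply]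
    calc ∑ i, v i ^ (j : ℕ) * d i = ∑ i, c i * v i ^ ((j : ℕ) + 1) :=
          Finset.sum_congr rfl fun i _ => by rw [hd]; ring
      _ = 0 := h j
  have hd0 : d = 0 := hMinj (by rw [hzero, Matrix.mulVec_zero])
  intro i
  have hdi : c i * v i = 0 := congrFun hd0 i
  have hvne : v i ≠ 0 := by
    rw [hv]; positivity
  exact (mul_eq_zero.1 hdi).resolve_right hvne

end Counting

/-- If `|Hom(F_ℓ(H,X), G₁)| = |Hom(F_ℓ(H,X), G₂)|` for all positive
integers `ℓ`, then `|Ans((H,X), G₁)| = |Ans((H,X), G₂)|`. -/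
theorem stmt7 {V W₁ W₂ : Type*} [Fintype V] [Finite W₁] [Finite W₂]
    (H : SimpleGraph V) (X : Set V)
    (G₁ : SimpleGraph W₁) (G₂ : SimpleGraph W₂)
    (hhom : ∀ ℓ : ℕ, 0 < ℓ →
      Nat.card (copyGraph H X ℓ →g G₁) = Nat.card (copyGraph H X ℓ →g G₂)) :
    Nat.card ↥(Answers H X G₁) = Nat.card ↥(Answers H X G₂) := by
  classical
  cases nonempty_fintype W₁
  cases nonempty_fintype W₂
  set E₁ : (↥X → W₁) → ℕ :=
    fun a => Nat.card {b : ↥(Xᶜ) → W₁ // IsExt H X G₁ a b} with hE₁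
  set E₂ : (↥X → W₂) → ℕ :=
    fun a => Nat.card {b : ↥(Xᶜ) → W₂ // IsExt H X G₂ a b} with hE₂
  set B : ℕ := max (Nat.card (↥(Xᶜ) → W₁)) (Nat.card (↥(Xᶜ) → W₂)) with hB
  have hle₁ : ∀ a, E₁ a ≤ B :=
    fun a => le_trans (Finite.card_subtype_le _) (le_max_left _ _)
  have hle₂ : ∀ a, E₂ a ≤ B :=
    fun a => le_trans (Finite.card_subtype_le _) (le_max_right _ _)
  set n₁ : ℕ → ℕ := fun k => (Finset.univ.filter fun a => E₁ a = k).card with hn₁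
  set n₂ : ℕ → ℕ := fun k => (Finset.univ.filter fun a => E₂ a = k).card with hn₂
  have hpow : ∀ ℓ : ℕ, 0 < ℓ →
      ∑ k ∈ Finset.Icc 1 B, n₁ k * k ^ ℓ = ∑ k ∈ Finset.Icc 1 B, n₂ k * k ^ ℓ := by
    intro ℓ hℓ
    have h := hhom ℓ hℓ
    rw [card_hom_eq H X G₁ ℓ hℓ, card_hom_eq H X G₂ ℓ hℓ] at h
    rw [← sum_pow_group E₁ B hle₁ ℓ hℓ, ← sum_pow_group E₂ B hle₂ ℓ hℓ]
    exact h
  -- convert Icc sums to Fin B sums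
  have hIcc : ∀ (M : Type) (_ : AddCommMonoid M) (f : ℕ → M),
      ∑ k ∈ Finset.Icc 1 B, f k = ∑ i : Fin B, f (i + 1) := by
    intro M _ f
    rw [← Finset.Ico_add_one_right_eq_Icc, Finset.sum_Ico_eq_sum_range,
      Fin.sum_univ_eq_sum_range (fun i => f (i + 1)) B]
    norm_num
    exact Finset.sum_congr rfl fun i _ => by rw [add_comm]
  set c : Fin B → ℚ := fun i => (n₁ (i + 1) : ℚ) - (n₂ (i + 1) : ℚ) with hc
  have hc0 : ∀ i, c i = 0 := by
    apply vandermonde_zero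
    intro j
    have h := hpow ((j : ℕ) + 1) (Nat.succ_pos _)
    have hq : ∑ k ∈ Finset.Icc 1 B, (n₁ k : ℚ) * (k : ℚ) ^ ((j : ℕ) + 1)
        = ∑ k ∈ Finset.Icc 1 B, (n₂ k : ℚ) * (k : ℚ) ^ ((j : ℕ) + 1) := by
      have := congrArg (Nat.cast (R := ℚ)) h
      push_cast at this
      exact this
    rw [hIcc ℚ _ (fun k => (n₁ k : ℚ) * (k : ℚ) ^ ((j : ℕ) + 1)),
      hIcc ℚ _ (fun k => (n₂ k : ℚ) * (k : ℚ) ^ ((j : ℕ) + 1))] at hq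
    have : ∑ i : Fin B, c i * ((i : ℚ) + 1) ^ ((j : ℕ) + 1)
        = ∑ i : Fin B, ((n₁ (i + 1) : ℚ) * ((i + 1 : ℕ) : ℚ) ^ ((j : ℕ) + 1)
          - (n₂ (i + 1) : ℚ) * ((i + 1 : ℕ) : ℚ) ^ ((j : ℕ) + 1)) := by
      refine Finset.sum_congr rfl fun i _ => ?_
      rw [hc]
      push_cast
      ring
    rw [this, Finset.sum_sub_distrib, hq, sub_self]
  have hn : ∀ k ∈ Finset.Icc 1 B, n₁ k = n₂ k := by
    intro k hk
    obtain ⟨hk1, hk2⟩ := Finset.mem_Icc.1 hk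
    have hi : k - 1 < B := by omega
    have := hc0 ⟨k - 1, hi⟩
    rw [hc, sub_eq_zero] at this
    have hkk : (⟨k - 1, hi⟩ : Fin B) + 1 = k := by simp; omega
    rw [hkk] at this
    exact_mod_cast this
  rw [card_answers H X G₁, card_answers H X G₂, count_group E₁ B hle₁,
    count_group E₂ B hle₂]
  exact Finset.sum_congr rfl hn
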